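/- For any prioritized knowledge base with finite dataset and acyclic priority relation, there exists at least one Pareto-optimal repair. -/

import Mathlib

variable {α : Type*}

def DownwardClosed (Cons : Set (Set α)) : Prop :=
  ∀ S ∈ Cons, ∀ S' ⊆ S, S' ∈ Cons

def IsConflict (D : Set α) (Cons : Set (Set α)) (C : Set α) : Prop :=
  C ⊆ D ∧ C ∉ Cons ∧ ∀ C' ⊂ C, C' ∈ Cons

def IsRepair (D : Set α) (Cons : Set (Set α)) (R : Set α) : Prop :=
  R ⊆ D ∧ R ∈ Cons ∧ ∀ S, S ⊆ D → S ∈ Cons → R ⊆ S → S = R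

def Acyclic (pr : α → α → Prop) : Prop :=
  ∀ a, ¬ Relation.TransGen pr a a

def PriorityRel (D : Set α) (Cons : Set (Set α)) (pr : α → α → Prop) : Prop :=
  Acyclic pr ∧ ∀ a b, pr a b → ∃ C, IsConflict D Cons C ∧ a ∈ C ∧ b ∈ C

def ParetoImp (Cons : Set (Set α)) (pr : α → α → Prop) (D R B : Set α) : Prop :=
  B ⊆ D ∧ B ∈ Cons ∧ ∃ β ∈ B \ R, ∀ a ∈ R \ B, pr β a

def GlobalImp (Cons : Set (Set α)) (pr : α → α → Prop) (D R B : Set α) : Prop :=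
  B ⊆ D ∧ B ∈ Cons ∧ B ≠ R ∧ ∀ a ∈ R \ B, ∃ β ∈ B \ R, pr β a

def ParetoOpt (Cons : Set (Set α)) (pr : α → α → Prop) (D R : Set α) : Prop :=
  IsRepair D Cons R ∧ ∀ B, ¬ ParetoImp Cons pr D R B

def GlobalOpt (Cons : Set (Set α)) (pr : α → α → Prop) (D R : Set α) : Prop :=
  IsRepair D Cons R ∧ ∀ B, ¬ GlobalImp Cons pr D R B

def TotalPrio (D : Set α) (Cons : Set (Set α)) (pr : α → α → Prop) : Prop :=
  ∀ a b, a ≠ b → (∃ C, IsConflict D Cons C ∧ a ∈ C ∧ b ∈ C) → pr a b ∨ pr b a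

def IsCompletion (D : Set α) (Cons : Set (Set α)) (pr pr' : α → α → Prop) : Prop :=
  PriorityRel D Cons pr' ∧ TotalPrio D Cons pr' ∧ ∀ a b, pr a b → pr' a b

def ComplOpt (Cons : Set (Set α)) (pr : α → α → Prop) (D R : Set α) : Prop :=
  ∃ pr', IsCompletion D Cons pr pr' ∧ GlobalOpt Cons pr' D R


private lemma sum_two_pow_lt' (n : ℕ) : ∑ i ∈ Finset.range n, 2 ^ i < 2 ^ n := by
  induction n with
  | zero => simp
  | succ n ih => rw [Finset.sum_range_succ, pow_succ]; omega

open Classical in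
noncomputable def rnk (F : Finset α) (s : α → α → Prop) (x : α) : ℕ :=
  (F.filter (fun y => s y x ∧ y ≠ x)).card

lemma rnk_lt (F : Finset α) (s : α → α → Prop)
    (htr : ∀ a b c, s a b → s b c → s a c)
    (hanti : ∀ a b, s a b → s b a → a = b)
    {x y : α} (hx : x ∈ F) (hy : y ∈ F) (hs : s y x) (hne : y ≠ x) :
    rnk F s y < rnk F s x := by
  classical
  unfold rnk
  apply Finset.card_lt_card
  rw [Finset.ssubset_iff_of_subset]
  · exact ⟨y, by simp [hy, hs, hne], by simp⟩
  · intro z hz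
    simp only [Finset.mem_filter] at hz ⊢
    refine ⟨hz.1, htr _ _ _ hz.2.1 hs, ?_⟩
    rintro rfl
    exact hne (hanti _ _ hs hz.2.1)

lemma rnk_ne (F : Finset α) (s : α → α → Prop)
    (htr : ∀ a b c, s a b → s b c → s a c)
    (hanti : ∀ a b, s a b → s b a → a = b)
    (htot : ∀ a b, s a b ∨ s b a)
    {x y : α} (hx : x ∈ F) (hy : y ∈ F) (hne : y ≠ x) :
    rnk F s y ≠ rnk F s x := by
  rcases htot y x with h | h
  · exact (rnk_lt F s htr hanti hx hy h hne).ne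
  · exact (rnk_lt F s htr hanti hy hx h (Ne.symm hne)).ne'

lemma sum_lt_sum_of_lex (F : Finset α) (s : α → α → Prop)
    (htr : ∀ a b c, s a b → s b c → s a c)
    (hanti : ∀ a b, s a b → s b a → a = b)
    (htot : ∀ a b, s a b ∨ s b a)
    (A B : Finset α) (hA : A ⊆ F) (hB : B ⊆ F)
    {x : α} (hxB : x ∈ B) (hxA : x ∉ A)
    (hlt : ∀ y ∈ A, y ∉ B → rnk F s y < rnk F s x) :
    ∑ y ∈ A, 2 ^ rnk F s y < ∑ y ∈ B, 2 ^ rnk F s y := by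
  classical
  obtain ⟨x', hx'D, hmax⟩ := Finset.exists_max_image (B \ A) (rnk F s)
    ⟨x, Finset.mem_sdiff.2 ⟨hxB, hxA⟩⟩
  rw [Finset.mem_sdiff] at hx'D
  obtain ⟨hx'B, hx'A⟩ := hx'D
  set r := rnk F s x' with hr
  have hxr : rnk F s x ≤ r := hmax x (Finset.mem_sdiff.2 ⟨hxB, hxA⟩)
  have hHi : A.filter (fun y => r < rnk F s y) = B.filter (fun y => r < rnk F s y) := by
    ext y
    simp only [Finset.mem_filter]
    constructor
    · rintro ⟨hyA, hy⟩
      refine ⟨?_, hy⟩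
      by_contra hyB
      exact absurd (hlt y hyA hyB) (by omega)
    · rintro ⟨hyB, hy⟩
      refine ⟨?_, hy⟩
      by_contra hyA
      exact absurd (hmax y (Finset.mem_sdiff.2 ⟨hyB, hyA⟩)) (by omega)
  rw [← Finset.sum_filter_add_sum_filter_not A (fun y => r < rnk F s y),
      ← Finset.sum_filter_add_sum_filter_not B (fun y => r < rnk F s y), hHi]
  have hlowB : 2 ^ r ≤ ∑ y ∈ B.filter (fun y => ¬ r < rnk F s y), 2 ^ rnk F s y := by
    have : x' ∈ B.filter (fun y => ¬ r < rnk F s y) := by simp [hx'B, hr]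
    calc 2 ^ r = 2 ^ rnk F s x' := rfl
    _ ≤ _ := Finset.single_le_sum (f := fun y => 2 ^ rnk F s y) (fun i _ => Nat.zero_le _) this
  have hlowA : ∑ y ∈ A.filter (fun y => ¬ r < rnk F s y), 2 ^ rnk F s y < 2 ^ r := by
    set Alo := A.filter (fun y => ¬ r < rnk F s y) with hAlo
    have hsub : Alo ⊆ A := Finset.filter_subset _ _
    have hrlt : ∀ y ∈ Alo, rnk F s y < r := by
      intro y hy
      rw [hAlo, Finset.mem_filter] at hy
      have hne : y ≠ x' := by rintro rfl; exact hx'A (hsub (by rw [hAlo]; exact Finset.mem_filter.2 hy))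
      have := rnk_ne F s htr hanti htot (hB hx'B) (hA (hsub (hAlo ▸ Finset.mem_filter.2 hy))) hne
      omega
    have hinj : ∀ y ∈ Alo, ∀ z ∈ Alo, rnk F s y = rnk F s z → y = z := by
      intro y hy z hz hyz
      by_contra hne
      exact rnk_ne F s htr hanti htot (hA (hsub hz)) (hA (hsub hy)) hne hyz
    calc ∑ y ∈ Alo, 2 ^ rnk F s y = ∑ i ∈ Alo.image (rnk F s), 2 ^ i :=
          (Finset.sum_image hinj).symm
    _ ≤ ∑ i ∈ Finset.range r, 2 ^ i := by
          apply Finset.sum_le_sum_of_subset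
          intro i hi
          obtain ⟨y, hy, rfl⟩ := Finset.mem_image.1 hi
          exact Finset.mem_range.2 (hrlt y hy)
    _ < 2 ^ r := sum_two_pow_lt' r
  omega

lemma exists_repair_superset (D : Set α) (hD : D.Finite) (Cons : Set (Set α))
    (S : Set α) (hSD : S ⊆ D) (hSc : S ∈ Cons) :
    ∃ R, S ⊆ R ∧ (R ⊆ D ∧ R ∈ Cons ∧ ∀ T, T ⊆ D → T ∈ Cons → R ⊆ T → T = R) := by
  have hfin : {T : Set α | S ⊆ T ∧ T ⊆ D ∧ T ∈ Cons}.Finite :=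
    hD.finite_subsets.subset (fun T hT => hT.2.1)
  obtain ⟨R, hRmem, hmax⟩ := Set.Finite.exists_maximalFor id _ hfin ⟨S, subset_rfl, hSD, hSc⟩
  exact ⟨R, hRmem.1, hRmem.2.1, hRmem.2.2,
    fun T hTD hTc hRT => subset_antisymm (hmax ⟨hRmem.1.trans hRT, hTD, hTc⟩ hRT) hRT⟩

/-- For any prioritized KB with finite dataset and acyclic priority relation, there
exists at least one Pareto-optimal repair. -/
theorem exists_paretoOpt_repair
    (D : Set α) (hD : D.Finite) (Cons : Set (Set α))
    (hdc : DownwardClosed Cons) (hempty : (∅ : Set α) ∈ Cons)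
    (pr : α → α → Prop) (hpr : PriorityRel D Cons pr) :
    ∃ R, ParetoOpt Cons pr D R := by
  
  classical
  obtain ⟨hacy, -⟩ := hpr
  let r0 : α → α → Prop := fun a b => a = b ∨ Relation.TransGen pr b a
  haveI : IsPartialOrder α r0 :=
    { refl := fun a => Or.inl rfl
      trans := by
        rintro a b c (rfl | h1) (rfl | h2)
        · exact Or.inl rfl
        · exact Or.inr h2
        · exact Or.inr h1
        · exact Or.inr (h2.trans h1)
      antisymm := by
        rintro a b (rfl | h1) h2
        · rfl
        · rcases h2 with rfl | h2
          · rfl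
          · exact absurd (h2.trans h1) (hacy a) }
  obtain ⟨s, hlin, hr0s⟩ := extend_partialOrder r0
  haveI : IsLinearOrder α s := hlin
  have htr : ∀ a b c, s a b → s b c → s a c := fun a b c => IsTrans.trans a b c
  have hanti : ∀ a b, s a b → s b a → a = b := fun a b => Std.Antisymm.antisymm a b
  have htot : ∀ a b, s a b ∨ s b a := Std.Total.total
  set F := hD.toFinset with hF
  set w : Set α → ℕ := fun S => ∑ y ∈ F.filter (· ∈ S), 2 ^ rnk F s y with hw
  have hRsfin : {R : Set α | IsRepair D Cons R}.Finite :=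
    hD.finite_subsets.subset (fun R hR => hR.1)
  obtain ⟨R0, -, hR0⟩ := exists_repair_superset D hD Cons ∅ (Set.empty_subset D) hempty
  obtain ⟨R, hR, hRmax⟩ := Set.Finite.exists_maximalFor w _ hRsfin ⟨R0, hR0⟩
  refine ⟨R, hR, ?_⟩
  rintro B ⟨hBD, hBc, β, hβ, himp⟩
  obtain ⟨hβB, hβR⟩ := hβ
  have hB0B : (R ∩ B) ∪ {β} ⊆ B :=
    Set.union_subset Set.inter_subset_right (Set.singleton_subset_iff.2 hβB)
  obtain ⟨B', hB0B', hB'rep⟩ := exists_repair_superset D hD Cons ((R ∩ B) ∪ {β})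
    (hB0B.trans hBD) (hdc B hBc _ hB0B)
  have hβF : β ∈ F := hD.mem_toFinset.2 (hBD hβB)
  have hlt : w R < w B' := by
    apply sum_lt_sum_of_lex F s htr hanti htot _ _ (Finset.filter_subset _ _)
      (Finset.filter_subset _ _) (x := β)
    · exact Finset.mem_filter.2 ⟨hβF, hB0B' (Set.mem_union_right _ rfl)⟩
    · simp [hβR]
    · intro y hy hyB'
      rw [Finset.mem_filter] at hy
      have hyF : y ∈ F := hy.1
      have hyR : y ∈ R := hy.2
      have hynB' : y ∉ B' := fun h => hyB' (Finset.mem_filter.2 ⟨hyF, h⟩)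
      have hynB : y ∉ B := fun h => hynB' (hB0B' (Set.mem_union_left _ ⟨hyR, h⟩))
      have hprβy : pr β y := himp y ⟨hyR, hynB⟩
      have hne : y ≠ β := fun h => hβR (h ▸ hyR)
      exact rnk_lt F s htr hanti hβF hyF
        (hr0s y β (Or.inr (Relation.TransGen.single hprβy))) hne
  exact absurd (hRmax hB'rep hlt.le) (not_le.2 hlt)
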